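/- The softmax function on ℝ^C, defined by Softmax(x)_i = e^{x_i} / Σ_j e^{x_j}, is Lipschitz continuous with Lipschitz constant √(C/2) with respect to the Euclidean norm. -/

import Mathlib

open Finset

lemma softmax_key_cs {C : ℕ} (s d : Fin C → ℝ) (hs : ∀ j, 0 ≤ s j)
    (hsum : ∑ j, s j = 1) (i : Fin C) :
    |s i * d i - s i * ∑ j, s j * d j| ≤ Real.sqrt ((∑ j, d j ^ 2) / 2) := by
  have hp0 : 0 ≤ s i := hs i
  have hp1 : s i ≤ 1 := hsum ▸ Finset.single_le_sum (fun j _ => hs j) (Finset.mem_univ i)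
  have hrw : s i * d i - s i * ∑ j, s j * d j
      = ∑ j, (s i * ((if j = i then 1 else 0) - s j)) * d j := by
    have h1 : ∑ j, (s i * ((if j = i then (1:ℝ) else 0) - s j)) * d j
        = (∑ j, s i * (if j = i then (1:ℝ) else 0) * d j) - ∑ j, s i * (s j * d j) := by
      rw [← Finset.sum_sub_distrib]; exact Finset.sum_congr rfl fun j _ => by ring
    rw [h1]
    simp [Finset.mul_sum, mul_ite, ite_mul]
  have cs := Finset.sum_mul_sq_le_sq_mul_sq Finset.univ
      (fun j => s i * ((if j = i then 1 else 0) - s j)) d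
  have hcsq : ∑ j, (s i * ((if j = i then (1:ℝ) else 0) - s j)) ^ 2 ≤ 1 / 2 := by
    have hexp : ∑ j, (s i * ((if j = i then (1:ℝ) else 0) - s j)) ^ 2
        = s i ^ 2 * ((1 - 2 * s i) + ∑ j, s j ^ 2) := by
      have : ∀ j, (s i * ((if j = i then (1:ℝ) else 0) - s j)) ^ 2
          = s i ^ 2 * ((if j = i then (1:ℝ) else 0) - 2 * ((if j = i then (1:ℝ) else 0) * s j) + s j ^ 2) := by
        intro j; by_cases h : j = i <;> simp [h] <;> ring
      rw [Finset.sum_congr rfl fun j _ => this j]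
      rw [← Finset.mul_sum]
      congr 1
      rw [Finset.sum_add_distrib, Finset.sum_sub_distrib]
      simp [ite_mul, Finset.mul_sum]
    have hsq1 : ∑ j, s j ^ 2 ≤ 1 := by
      have := Finset.sum_sq_le_sq_sum_of_nonneg (s := Finset.univ) (f := s) (fun j _ => hs j)
      simpa [hsum] using this
    rw [hexp]
    nlinarith [sq_nonneg (s i), sq_nonneg (1 - s i), sq_nonneg (s i * (1 - s i)),
      sq_nonneg (2 * s i - 1)]
  have hd2 : (0:ℝ) ≤ ∑ j, d j ^ 2 := Finset.sum_nonneg fun j _ => sq_nonneg _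
  have hsq : (s i * d i - s i * ∑ j, s j * d j) ^ 2 ≤ (∑ j, d j ^ 2) / 2 := by
    rw [hrw]
    calc (∑ j, (s i * ((if j = i then (1:ℝ) else 0) - s j)) * d j) ^ 2
        ≤ (∑ j, (s i * ((if j = i then (1:ℝ) else 0) - s j)) ^ 2) * ∑ j, d j ^ 2 := cs
      _ ≤ (1/2) * ∑ j, d j ^ 2 := by gcongr
      _ = (∑ j, d j ^ 2) / 2 := by ring
  calc |s i * d i - s i * ∑ j, s j * d j|
      = Real.sqrt ((s i * d i - s i * ∑ j, s j * d j) ^ 2) := (Real.sqrt_sq_eq_abs _).symm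
    _ ≤ Real.sqrt ((∑ j, d j ^ 2) / 2) := Real.sqrt_le_sqrt hsq

lemma softmax_coord_lipschitz {C : ℕ} (hC : 0 < C) (x y : Fin C → ℝ) (i : Fin C) :
    (Real.exp (x i) / ∑ j, Real.exp (x j) - Real.exp (y i) / ∑ j, Real.exp (y j)) ^ 2
      ≤ (∑ j, (x j - y j) ^ 2) / 2 := by
  have hne : Nonempty (Fin C) := Fin.pos_iff_nonempty.mp hC
  set d : Fin C → ℝ := fun j => y j - x j with hd
  set u : ℝ → Fin C → ℝ := fun t j => x j + d j * t with hu
  have hA : ∀ t, 0 < ∑ j, Real.exp (u t j) := fun t =>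
    Finset.sum_pos (fun j _ => Real.exp_pos _) Finset.univ_nonempty
  set D : ℝ → ℝ := fun t =>
    (Real.exp (u t i) * d i * (∑ j, Real.exp (u t j)) -
      Real.exp (u t i) * (∑ j, Real.exp (u t j) * d j)) /
      (∑ j, Real.exp (u t j)) ^ 2 with hD
  set g : ℝ → ℝ := fun t => Real.exp (u t i) / ∑ j, Real.exp (u t j) with hg
  have hderiv : ∀ t : ℝ, HasDerivAt g (D t) t := by
    intro t
    have h1 : ∀ j, HasDerivAt (fun t => Real.exp (u t j)) (Real.exp (u t j) * d j) t := by
      intro j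
      have : HasDerivAt (fun t : ℝ => x j + d j * t) (d j) t := by
        simpa using ((hasDerivAt_id t).const_mul (d j)).const_add (x j)
      simpa using this.exp
    have h2 : HasDerivAt (fun t => ∑ j, Real.exp (u t j)) (∑ j, Real.exp (u t j) * d j) t :=
      HasDerivAt.fun_sum fun j _ => h1 j
    exact (h1 i).div h2 (hA t).ne'
  have hbound : ∀ t : ℝ, |D t| ≤ Real.sqrt ((∑ j, d j ^ 2) / 2) := by
    intro t
    set s : Fin C → ℝ := fun j => Real.exp (u t j) / ∑ k, Real.exp (u t k) with hs
    have hs0 : ∀ j, 0 ≤ s j := fun j => div_nonneg (Real.exp_pos _).le (hA t).le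
    have hs1 : ∑ j, s j = 1 := by
      rw [hs, ← Finset.sum_div, div_self (hA t).ne']
    have hDeq : D t = s i * d i - s i * ∑ j, s j * d j := by
      rw [hD, hs]
      have hAne := (hA t).ne'
      field_simp
      rw [← Finset.sum_div]
      field_simp
    rw [hDeq]
    exact softmax_key_cs s d hs0 hs1 i
  have hmvt : ‖g 1 - g 0‖ ≤ Real.sqrt ((∑ j, d j ^ 2) / 2) := by
    apply norm_image_sub_le_of_norm_deriv_le_segment_01'
      (f' := D) (fun t _ => (hderiv t).hasDerivWithinAt)
    intro t _
    simpa using hbound t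
  have hg0 : g 0 = Real.exp (x i) / ∑ j, Real.exp (x j) := by simp [hg, hu]
  have hg1 : g 1 = Real.exp (y i) / ∑ j, Real.exp (y j) := by simp [hg, hu, hd]
  have habs : |Real.exp (x i) / (∑ j, Real.exp (x j)) - Real.exp (y i) / ∑ j, Real.exp (y j)|
      ≤ Real.sqrt ((∑ j, d j ^ 2) / 2) := by
    rw [← hg0, ← hg1, abs_sub_comm]
    exact hmvt
  have hd2 : (0:ℝ) ≤ (∑ j, d j ^ 2) / 2 :=
    div_nonneg (Finset.sum_nonneg fun j _ => sq_nonneg _) (by norm_num)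
  have := sq_le_sq' (neg_le_of_abs_le habs) (le_of_abs_le habs)
  calc (Real.exp (x i) / ∑ j, Real.exp (x j) - Real.exp (y i) / ∑ j, Real.exp (y j)) ^ 2
      ≤ Real.sqrt ((∑ j, d j ^ 2) / 2) ^ 2 := this
    _ = (∑ j, d j ^ 2) / 2 := Real.sq_sqrt hd2
    _ = (∑ j, (x j - y j) ^ 2) / 2 := by
        congr 1; exact Finset.sum_congr rfl fun j _ => by rw [hd]; ring

theorem softmax_lipschitz (C : ℕ)
    (S : (Fin C → ℝ) → (Fin C → ℝ))
    (hS : ∀ x i, S x i = Real.exp (x i) / ∑ j, Real.exp (x j)) :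
    ∀ x y : Fin C → ℝ,
      Real.sqrt (∑ i, (S x i - S y i) ^ 2)
        ≤ Real.sqrt ((C : ℝ) / 2) * Real.sqrt (∑ i, (x i - y i) ^ 2) := by
  intro x y
  rcases Nat.eq_zero_or_pos C with h0 | hC
  · subst h0; simp
  have key : ∀ i, (S x i - S y i) ^ 2 ≤ (∑ j, (x j - y j) ^ 2) / 2 := by
    intro i
    rw [hS x i, hS y i]
    exact softmax_coord_lipschitz hC x y i
  have hsum : ∑ i, (S x i - S y i) ^ 2 ≤ (C : ℝ) / 2 * ∑ j, (x j - y j) ^ 2 := by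
    calc ∑ i, (S x i - S y i) ^ 2
        ≤ ∑ _i : Fin C, (∑ j, (x j - y j) ^ 2) / 2 := Finset.sum_le_sum fun i _ => key i
      _ = (C : ℝ) * ((∑ j, (x j - y j) ^ 2) / 2) := by
          simp [Finset.sum_const, Finset.card_univ]
      _ = (C : ℝ) / 2 * ∑ j, (x j - y j) ^ 2 := by ring
  have hx2 : (0:ℝ) ≤ ∑ j, (x j - y j) ^ 2 := Finset.sum_nonneg fun j _ => sq_nonneg _
  calc Real.sqrt (∑ i, (S x i - S y i) ^ 2)
      ≤ Real.sqrt ((C : ℝ) / 2 * ∑ j, (x j - y j) ^ 2) := Real.sqrt_le_sqrt hsum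
    _ = Real.sqrt ((C : ℝ) / 2) * Real.sqrt (∑ j, (x j - y j) ^ 2) :=
        Real.sqrt_mul (by positivity) _
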